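/- arXiv:1303.3924 — 5 statements merged into one kernel-verified Lean document; each statement's English description precedes it below -/
import Mathlib

section
/- In the category of right S-semimodules over a semiring S, every monomorphism is an injective map, and a morphism is surjective if and only if it is a regular epimorphism. -/
universe u

section Aux

variable {S : Type u} [Semiring S] {M P : Type u} [AddCommMonoid M] [Module S M]
  [AddCommMonoid P] [Module S P] (g h : P →ₗ[S] M)

/-- relation generating the coequalizer congruence, closed under scalar action. -/
private def ccRel (x y : M) : Prop := ∃ (s : S) (p : P), x = s • g p ∧ y = s • h p

private def cc : AddCon M := addConGen (ccRel g h)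

private lemma cc_smul (s : S) {x y : M} (hxy : cc g h x y) : cc g h (s • x) (s • y) := by
  induction hxy with
  | of x y hr =>
      obtain ⟨t, p, rfl, rfl⟩ := hr
      rw [smul_smul, smul_smul]
      exact AddConGen.Rel.of _ _ ⟨s * t, p, rfl, rfl⟩
  | refl x => exact AddConGen.Rel.refl _
  | symm _ ih => exact ih.symm
  | trans _ _ ih1 ih2 => exact ih1.trans ih2
  | add _ _ ih1 ih2 => rw [smul_add, smul_add]; exact ih1.add ih2

private instance : SMul S (cc g h).Quotient :=
  ⟨fun s => Quotient.map' (s • ·) fun _ _ hxy => cc_smul g h s hxy⟩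

private instance : Module S (cc g h).Quotient where
  one_smul x := Quotient.inductionOn' x fun m => congrArg Quotient.mk'' (one_smul S m)
  mul_smul s t x := Quotient.inductionOn' x fun m => congrArg Quotient.mk'' (mul_smul s t m)
  smul_add s x y := Quotient.inductionOn₂' x y fun m n => congrArg Quotient.mk'' (smul_add s m n)
  smul_zero s := congrArg Quotient.mk'' (smul_zero s)
  add_smul s t x := Quotient.inductionOn' x fun m => congrArg Quotient.mk'' (add_smul s t m)
  zero_smul x := Quotient.inductionOn' x fun m => congrArg Quotient.mk'' (zero_smul S m)

private def ccMk : M →ₗ[S] (cc g h).Quotient where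
  toFun := ((cc g h).mk' : M →+ _)
  map_add' := map_add _
  map_smul' _ _ := rfl

private lemma ccMk_surjective : Function.Surjective (ccMk g h) :=
  AddCon.mk'_surjective

variable {N : Type u} [AddCommMonoid N] [Module S N] (f : M →ₗ[S] N)

private lemma cc_le_ker (w : f.comp g = f.comp h) {x y : M} (hxy : cc g h x y) : f x = f y := by
  induction hxy with
  | of x y hr =>
      obtain ⟨t, p, rfl, rfl⟩ := hr
      rw [map_smul, map_smul]
      congr 1
      exact LinearMap.congr_fun w p
  | refl x => rfl
  | symm _ ih => exact ih.symm
  | trans _ _ ih1 ih2 => exact ih1.trans ih2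
  | add _ _ ih1 ih2 => rw [map_add, map_add, ih1, ih2]

/-- `f` descends to the quotient. -/
private def ccDesc (w : f.comp g = f.comp h) : (cc g h).Quotient →ₗ[S] N where
  toFun := fun q => Quotient.liftOn' q f fun _ _ hxy => cc_le_ker g h f w hxy
  map_add' x y := Quotient.inductionOn₂' x y fun m n => map_add f m n
  map_smul' s x := Quotient.inductionOn' x fun m => map_smul f s m

end Aux

/-- A witness that `f` is a regular epimorphism in the category of `S`-semimodules:
`f` is a coequalizer of a pair of morphisms `g, h`. -/
structure RegEpiWitness (S : Type u) [Semiring S] (M N : Type u)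
    [AddCommMonoid M] [Module S M] [AddCommMonoid N] [Module S N]
    (f : M →ₗ[S] N) : Type (u + 1) where
  P : Type u
  [addP : AddCommMonoid P]
  [modP : Module S P]
  g : P →ₗ[S] M
  h : P →ₗ[S] M
  w : f.comp g = f.comp h
  isCoeq : ∀ (Q : Type u) [AddCommMonoid Q] [Module S Q] (k : M →ₗ[S] Q),
    k.comp g = k.comp h → ∃! l : N →ₗ[S] Q, l.comp f = k

/-- In the category of `S`-semimodules over a semiring `S`, every monomorphism is
injective, and a morphism is surjective if and only if it is a regular epimorphism. -/
theorem mono_injective_and_surjective_iff_regular_epi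
    {S : Type u} [Semiring S] {M N : Type u} [AddCommMonoid M] [Module S M]
    [AddCommMonoid N] [Module S N] (f : M →ₗ[S] N) :
    ((∀ (P : Type u) [AddCommMonoid P] [Module S P] (g h : P →ₗ[S] M),
        f.comp g = f.comp h → g = h) → Function.Injective f) ∧
    (Function.Surjective f ↔ Nonempty (RegEpiWitness S M N f)) := by
  constructor
  · intro hmono x y hxy
    have := hmono S (LinearMap.toSpanSingleton S M x) (LinearMap.toSpanSingleton S M y)
      (LinearMap.ext fun r => by simp [hxy])
    have h1 := LinearMap.congr_fun this 1
    simpa using h1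
  constructor
  · -- surjective → regular epi
    intro hf
    refine ⟨?_⟩
    refine
      { P := LinearMap.eqLocus (f.comp (LinearMap.fst S M M)) (f.comp (LinearMap.snd S M M))
        g := (LinearMap.fst S M M).comp (Submodule.subtype _)
        h := (LinearMap.snd S M M).comp (Submodule.subtype _)
        w := ?_
        isCoeq := ?_ }
    · ext ⟨⟨a, b⟩, hab⟩
      exact hab
    · intro Q _ _ k hk
      have hk' : ∀ a b : M, f a = f b → k a = k b := fun a b hab =>
        LinearMap.congr_fun hk ⟨(a, b), hab⟩
      have hsi : ∀ n, f (Function.surjInv hf n) = n := fun n => Function.surjInv_eq hf n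
      refine ⟨{ toFun := fun n => k (Function.surjInv hf n)
                map_add' := fun a b => ?_
                map_smul' := fun s a => ?_ }, ?_, ?_⟩
      · rw [← map_add k]
        apply hk'
        rw [map_add f, hsi, hsi, hsi]
      · rw [← map_smul k]
        apply hk'
        rw [map_smul f, hsi, hsi]
        rfl
      · ext m
        exact hk' _ _ (hsi (f m))
      · intro l' hl'
        ext n
        show l' n = k (Function.surjInv hf n)
        conv_lhs => rw [← hsi n]
        exact LinearMap.congr_fun hl' _
  · -- regular epi → surjective
    rintro ⟨wit⟩
    letI := wit.addP
    letI := wit.modP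
    have hw : (ccMk wit.g wit.h).comp wit.g = (ccMk wit.g wit.h).comp wit.h := by
      ext p
      exact AddCon.eq (cc wit.g wit.h) |>.mpr
        (AddConGen.Rel.of _ _ ⟨1, p, (one_smul S _).symm, (one_smul S _).symm⟩)
    obtain ⟨l, hl, -⟩ := wit.isCoeq _ (ccMk wit.g wit.h) hw
    obtain ⟨l₀, hl₀, huniq⟩ := wit.isCoeq N f wit.w
    have h1 : ((ccDesc wit.g wit.h f wit.w).comp l).comp f = f := by
      rw [LinearMap.comp_assoc, hl]; rfl
    have h2 : (LinearMap.id : N →ₗ[S] N).comp f = f := by ext; rfl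
    have hid : (ccDesc wit.g wit.h f wit.w).comp l = LinearMap.id :=
      (huniq _ h1).trans (huniq _ h2).symm
    intro n
    obtain ⟨m, hm⟩ := ccMk_surjective wit.g wit.h (l n)
    refine ⟨m, ?_⟩
    have : (ccDesc wit.g wit.h f wit.w) (l n) = n := LinearMap.congr_fun hid n
    rw [← this, ← hm]
    rfl
end

section
/- An S-linear map f : M → N between right S-semimodules induces an isomorphism M/Ker(f) ≅ f(M) if and only if f is k-uniform. -/
universe u

private lemma trans_aux {G : Type*} [AddCommMonoid G] {a b c u v u' v' : G}
    (h1 : a + u = b + v) (h2 : b + u' = c + v') : a + (u + u') = c + (v' + v) := by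
  calc a + (u + u') = (a + u) + u' := (add_assoc _ _ _).symm
    _ = (b + v) + u' := by rw [h1]
    _ = (b + u') + v := add_right_comm _ _ _
    _ = (c + v') + v := by rw [h2]
    _ = c + (v' + v) := add_assoc _ _ _

private lemma add_aux {G : Type*} [AddCommMonoid G] {w x y z u v u' v' : G}
    (h1 : w + u = x + v) (h2 : y + u' = z + v') :
    (w + y) + (u + u') = (x + z) + (v + v') := by
  rw [add_add_add_comm w y u u', h1, h2, add_add_add_comm]

variable {S : Type u} [Semiring S] {M N : Type u}
  [AddCommMonoid M] [Module S M] [AddCommMonoid N] [Module S N]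

/-- The congruence on `M` whose quotient is `M/Ker(f)`:
`m₁ ≡ m₂` iff `m₁ + k₁ = m₂ + k₂` for some `k₁, k₂ ∈ Ker(f)`. -/
def kerQuotCon (f : M →ₗ[S] N) : AddCon M where
  r a b := ∃ k₁ k₂, f k₁ = 0 ∧ f k₂ = 0 ∧ a + k₁ = b + k₂
  iseqv := by
    refine ⟨fun a => ⟨0, 0, map_zero f, map_zero f, rfl⟩, ?_, ?_⟩
    · rintro a b ⟨k₁, k₂, h₁, h₂, h⟩; exact ⟨k₂, k₁, h₂, h₁, h.symm⟩
    · rintro a b c ⟨k₁, k₂, h₁, h₂, h⟩ ⟨l₁, l₂, h₁', h₂', h'⟩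
      refine ⟨k₁ + l₁, l₂ + k₂, ?_, ?_, ?_⟩
      · rw [map_add, h₁, h₁', add_zero]
      · rw [map_add, h₂', h₂, add_zero]
      · exact trans_aux h h'
  add' := by
    rintro w x y z ⟨k₁, k₂, h₁, h₂, h⟩ ⟨l₁, l₂, h₁', h₂', h'⟩
    refine ⟨k₁ + l₁, k₂ + l₂, ?_, ?_, ?_⟩
    · rw [map_add, h₁, h₁', add_zero]
    · rw [map_add, h₂, h₂', add_zero]
    · exact add_aux h h'

/-- An `S`-linear map `f : M → N` induces an isomorphism `M/Ker(f) ≅ f(M)`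
if and only if `f` is `k`-uniform. -/
theorem quotient_ker_equiv_range_iff_kUniform (f : M →ₗ[S] N) :
    (∃ e : (kerQuotCon f).Quotient ≃+ LinearMap.range f,
        ∀ m : M, e ((kerQuotCon f).toQuotient m) = f.rangeRestrict m) ↔
      (∀ m m' : M, f m = f m' →
        ∃ k k', f k = 0 ∧ f k' = 0 ∧ m + k = m' + k') := by
  constructor
  · rintro ⟨e, he⟩ m m' hmm'
    have h1 : f.rangeRestrict m = f.rangeRestrict m' := Subtype.ext hmm'
    have h2 : (kerQuotCon f).toQuotient m = (kerQuotCon f).toQuotient m' :=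
      e.injective (by rw [he, he, h1])
    exact (AddCon.eq _).mp h2
  · intro hu
    have hker : ∀ a b, (kerQuotCon f) a b → f.rangeRestrict a = f.rangeRestrict b := by
      rintro a b ⟨k₁, k₂, h₁, h₂, h⟩
      apply Subtype.ext
      have : f (a + k₁) = f (b + k₂) := by rw [h]
      simpa [map_add, h₁, h₂] using this
    let g : (kerQuotCon f).Quotient →+ LinearMap.range f :=
      AddCon.lift _ (f.rangeRestrict.toAddMonoidHom) (fun a b h => hker a b h)
    have hbij : Function.Bijective g := by
      constructor
      · intro x y hxy
        induction x using AddCon.induction_on with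
        | H x =>
        induction y using AddCon.induction_on with
        | H y =>
        have : f x = f y := congrArg Subtype.val hxy
        exact (AddCon.eq _).mpr (hu x y this)
      · rintro ⟨_, m, rfl⟩
        exact ⟨(kerQuotCon f).toQuotient m, rfl⟩
    exact ⟨AddEquiv.ofBijective g hbij, fun m => rfl⟩
end

section
/- For every S-subsemimodule L ≤ M of a right S-semimodule M, the sequence 0 → L̄ → M → M/L → 0 is an exact sequence of S-semimodules, where L̄ = {m ∈ M : m + l₁ = l₂ for some l₁, l₂ ∈ L} is the subtractive closure of L. -/
universe u

/-- A sequence `X --f--> Y --g--> Z` of semimodules is exact iff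
`f(X) = Ker(g)` and `g` is `k`-uniform. -/
def IsExactSeq {X Y Z : Type*} [AddCommMonoid Y] [AddCommMonoid Z]
    (f : X → Y) (g : Y → Z) : Prop :=
  (∀ y : Y, (∃ x, f x = y) ↔ g y = 0) ∧
    ∀ y y' : Y, g y = g y' → ∃ k k', g k = 0 ∧ g k' = 0 ∧ y + k = y' + k'

variable {S : Type u} [Semiring S] {M : Type u} [AddCommMonoid M] [Module S M]

/-- The subtractive closure `L̄ = {m ∈ M : m + l₁ = l₂ for some l₁, l₂ ∈ L}`. -/
def subClosure (L : Submodule S M) : Submodule S M where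
  carrier := {m | ∃ l₁ ∈ L, ∃ l₂ ∈ L, m + l₁ = l₂}
  add_mem' := by
    rintro a b ⟨l₁, hl₁, l₂, hl₂, h⟩ ⟨l₁', hl₁', l₂', hl₂', h'⟩
    refine ⟨l₁ + l₁', L.add_mem hl₁ hl₁', l₂ + l₂', L.add_mem hl₂ hl₂', ?_⟩
    rw [add_add_add_comm, h, h']
  zero_mem' := ⟨0, L.zero_mem, 0, L.zero_mem, by rw [add_zero]⟩
  smul_mem' := by
    rintro s a ⟨l₁, hl₁, l₂, hl₂, h⟩
    exact ⟨s • l₁, L.smul_mem s hl₁, s • l₂, L.smul_mem s hl₂, by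
      rw [← smul_add, h]⟩

/-- The congruence `≡_L` on `M` whose quotient is `M/L`:
`m₁ ≡_L m₂` iff `m₁ + l₁ = m₂ + l₂` for some `l₁, l₂ ∈ L`. -/
def modCon (L : Submodule S M) : AddCon M where
  r a b := ∃ l₁ ∈ L, ∃ l₂ ∈ L, a + l₁ = b + l₂
  iseqv := by
    refine ⟨fun a => ⟨0, L.zero_mem, 0, L.zero_mem, rfl⟩, ?_, ?_⟩
    · rintro a b ⟨l₁, hl₁, l₂, hl₂, h⟩; exact ⟨l₂, hl₂, l₁, hl₁, h.symm⟩
    · rintro a b c ⟨l₁, hl₁, l₂, hl₂, h⟩ ⟨m₁, hm₁, m₂, hm₂, h'⟩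
      exact ⟨l₁ + m₁, L.add_mem hl₁ hm₁, m₂ + l₂, L.add_mem hm₂ hl₂,
        trans_aux h h'⟩
  add' := by
    rintro w x y z ⟨l₁, hl₁, l₂, hl₂, h⟩ ⟨m₁, hm₁, m₂, hm₂, h'⟩
    exact ⟨l₁ + m₁, L.add_mem hl₁ hm₁, l₂ + m₂, L.add_mem hl₂ hm₂,
      add_aux h h'⟩

/-- For every subsemimodule `L ≤ M`, the sequence `0 → L̄ → M → M/L → 0` is exact. -/
theorem subtractive_closure_short_exact (L : Submodule S M) :
    IsExactSeq (fun _ : PUnit.{u + 1} => (0 : subClosure L))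
      (fun x : subClosure L => (x : M)) ∧
    IsExactSeq (fun x : subClosure L => (x : M))
      (fun m : M => (modCon L).toQuotient m) ∧
    IsExactSeq (fun m : M => (modCon L).toQuotient m)
      (fun _ : (modCon L).Quotient => PUnit.unit.{u + 1}) := by
  refine ⟨⟨?_, ?_⟩, ⟨?_, ?_⟩, ⟨?_, ?_⟩⟩
  · intro y
    constructor
    · rintro ⟨x, rfl⟩
      rfl
    · intro hy
      exact ⟨PUnit.unit, (Subtype.coe_injective (by simpa using hy)).symm⟩
  · intro y y' h
    exact ⟨0, 0, rfl, rfl, by rw [add_zero, add_zero, Subtype.coe_injective h]⟩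
  · intro m
    constructor
    · rintro ⟨⟨x, l₁, hl₁, l₂, hl₂, hx⟩, rfl⟩
      show ((x : (modCon L).Quotient)) = ((0 : M) : (modCon L).Quotient)
      exact (AddCon.eq _).mpr ⟨l₁, hl₁, l₂, hl₂, by simpa using hx⟩
    · intro hm
      obtain ⟨l₁, hl₁, l₂, hl₂, h⟩ := (AddCon.eq _).mp
        (hm : ((m : (modCon L).Quotient)) = ((0 : M) : _))
      exact ⟨⟨m, l₁, hl₁, l₂, hl₂, by simpa using h⟩, rfl⟩
  · intro y y' h
    obtain ⟨l₁, hl₁, l₂, hl₂, hy⟩ := (AddCon.eq _).mp h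
    refine ⟨l₁, l₂, ?_, ?_, hy⟩
    · exact (AddCon.eq _).mpr ⟨0, L.zero_mem, l₁, hl₁, by simp⟩
    · exact (AddCon.eq _).mpr ⟨0, L.zero_mem, l₂, hl₂, by simp⟩
  · intro q
    constructor
    · intro _; rfl
    · intro _
      obtain ⟨m, rfl⟩ := AddCon.mk'_surjective (c := modCon L) q
      exact ⟨m, rfl⟩
  · intro y y' _
    exact ⟨y', y, rfl, rfl, add_comm y y'⟩
end

section
/- A right S-semimodule P is projective if and only if P has a dual basis: there exists a family {(p_λ, f_λ)}_{λ∈Λ} in P × P* such that for each p ∈ P the set {λ : f_λ(p) ≠ 0} is finite and p = Σ_λ p_λ f_λ(p). -/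
universe u

/-- A right `S`-semimodule `P` is projective if and only if `P` has a dual basis:
a family `{(p_λ, f_λ)}` in `P × P*` such that for each `p ∈ P` the set
`{λ : f_λ(p) ≠ 0}` is finite and `p = Σ_λ p_λ f_λ(p)`. -/
theorem projective_iff_dual_basis
    {S : Type u} [Semiring S] {P : Type u} [AddCommMonoid P] [Module S P] :
    (∀ (Y Z : Type u) [AddCommMonoid Y] [Module S Y] [AddCommMonoid Z]
        [Module S Z] (g : Y →ₗ[S] Z), Function.Surjective g →
        ∀ h : P →ₗ[S] Z, ∃ h' : P →ₗ[S] Y, g.comp h' = h) ↔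
      ∃ (Λ : Type u) (p : Λ → P) (f : Λ → (P →ₗ[S] S)),
        ∀ x : P, (Function.support fun l => f l x).Finite ∧
          ∑ᶠ l, (f l x) • p l = x := by
  constructor
  · intro H
    have hsurj : Function.Surjective (Finsupp.linearCombination S (id : P → P)) := by
      intro x
      exact ⟨Finsupp.single x 1, by simp⟩
    obtain ⟨s, hs⟩ := H (P →₀ S) P (Finsupp.linearCombination S id) hsurj LinearMap.id
    refine ⟨P, id, fun l => (Finsupp.lapply l).comp s, fun x => ?_⟩
    have hfin : (Function.support fun l => (s x) l).Finite := by
      apply Set.Finite.subset (s x).finite_support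
      intro l hl
      simpa using hl
    refine ⟨hfin, ?_⟩
    have heq : ∑ᶠ l, (s x) l • (id l : P) = ∑ l ∈ (s x).support, (s x) l • l := by
      apply finsum_eq_sum_of_support_subset
      intro l hl
      simp only [Function.mem_support] at hl
      simp only [Finset.coe_sort_coe, Finset.mem_coe, Finsupp.mem_support_iff]
      intro h0
      simp [h0] at hl
    simp only [LinearMap.comp_apply, Finsupp.lapply_apply]
    rw [heq]
    have := congrArg (fun (g : P →ₗ[S] P) => g x) hs
    simpa [Finsupp.linearCombination_apply, Finsupp.sum] using this
  · rintro ⟨Λ, p, f, hpf⟩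
    -- build the section s : P →ₗ[S] (P →₀ S)
    have hProj : Module.Projective S P := by
      rw [Module.projective_def']
      refine ⟨{ toFun := fun x => ∑ᶠ l, Finsupp.single (p l) (f l x)
                map_add' := ?_
                map_smul' := ?_ }, ?_⟩
      · intro x y
        have hx : (Function.support fun l => Finsupp.single (p l) (f l x)).Finite := by
          apply (hpf x).1.subset
          intro l hl
          simp only [Function.mem_support] at *
          intro h0; simp [h0] at hl
        have hy : (Function.support fun l => Finsupp.single (p l) (f l y)).Finite := by
          apply (hpf y).1.subset
          intro l hl
          simp only [Function.mem_support] at *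
          intro h0; simp [h0] at hl
        calc ∑ᶠ l, Finsupp.single (p l) (f l (x + y))
            = ∑ᶠ l, (Finsupp.single (p l) (f l x) + Finsupp.single (p l) (f l y)) := by
              simp [Finsupp.single_add]
          _ = _ := finsum_add_distrib hx hy
      · intro c x
        have hx : (Function.support fun l => Finsupp.single (p l) (f l x)).Finite := by
          apply (hpf x).1.subset
          intro l hl
          simp only [Function.mem_support] at *
          intro h0; simp [h0] at hl
        calc ∑ᶠ l, Finsupp.single (p l) (f l (c • x))
            = ∑ᶠ l, c • Finsupp.single (p l) (f l x) := by
              simp [Finsupp.smul_single, smul_eq_mul]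
          _ = c • ∑ᶠ l, Finsupp.single (p l) (f l x) := (smul_finsum' c hx).symm
      · ext x
        simp only [LinearMap.comp_apply, LinearMap.coe_mk, AddHom.coe_mk, LinearMap.id_apply]
        have hx : (Function.support fun l => Finsupp.single (p l) (f l x)).Finite := by
          apply (hpf x).1.subset
          intro l hl
          simp only [Function.mem_support] at *
          intro h0; simp [h0] at hl
        have := AddMonoidHom.map_finsum
          (Finsupp.linearCombination S (id : P → P)).toAddMonoidHom hx
        simp only [LinearMap.toAddMonoidHom_coe] at this
        rw [this]
        simp only [Finsupp.linearCombination_single, id_eq]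
        exact (hpf x).2
    intro Y Z _ _ _ _ g hg h
    obtain ⟨h', hh'⟩ := Module.projective_lifting_property g h hg
    exact ⟨h', hh'⟩
end

section
/- If a right S-semimodule P is uniformly generated and uniformly projective, then P is projective. -/
universe u

/-- A map `g` is `k`-uniform iff `g y = g y'` implies `y + k = y' + k'` for some
`k, k' ∈ Ker(g)`. -/
def KUniform {Y Z : Type*} [AddCommMonoid Y] [AddCommMonoid Z] (g : Y → Z) : Prop :=
  ∀ y y' : Y, g y = g y' → ∃ k k', g k = 0 ∧ g k' = 0 ∧ y + k = y' + k'

/-- If a right `S`-semimodule `P` is uniformly generated and uniformly projective,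
then `P` is projective. -/
theorem uniformly_generated_uniformly_projective_implies_projective
    {S : Type u} [Semiring S] {P : Type u} [AddCommMonoid P] [Module S P]
    (hgen : ∃ (Λ : Type u) (π : (Λ →₀ S) →ₗ[S] P),
      Function.Surjective π ∧ KUniform ⇑π)
    (hproj : ∀ (Y Z : Type u) [AddCommMonoid Y] [Module S Y] [AddCommMonoid Z]
      [Module S Z] (g : Y →ₗ[S] Z), Function.Surjective g → KUniform ⇑g →
      ∀ h : P →ₗ[S] Z, ∃ h' : P →ₗ[S] Y, g.comp h' = h) :
    ∀ (Y Z : Type u) [AddCommMonoid Y] [Module S Y] [AddCommMonoid Z]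
      [Module S Z] (g : Y →ₗ[S] Z), Function.Surjective g →
      ∀ h : P →ₗ[S] Z, ∃ h' : P →ₗ[S] Y, g.comp h' = h := by
  intro Y Z _ _ _ _ g hg h
  obtain ⟨Λ, π, hπs, hπu⟩ := hgen
  -- lift the identity along π, using uniform projectivity
  obtain ⟨σ, hσ⟩ := hproj _ _ π hπs hπu (LinearMap.id)
  -- lift h ∘ π along g using freeness
  choose y hy using fun lam : Λ => hg (h (π (Finsupp.single lam 1)))
  set φ : (Λ →₀ S) →ₗ[S] Y := Finsupp.linearCombination S y with hφ
  have hcomm : g.comp φ = h.comp π := by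
    apply Finsupp.lhom_ext
    intro lam s
    rw [← Finsupp.smul_single_one]
    simp only [LinearMap.coe_comp, Function.comp_apply, map_smul, hφ,
      Finsupp.linearCombination_single, one_smul, hy]
  refine ⟨φ.comp σ, ?_⟩
  rw [← LinearMap.comp_assoc, hcomm, LinearMap.comp_assoc, hσ, LinearMap.comp_id]
end
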